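/- Let Σ=(X,U,φ) be a system with inputs and let ‖·‖_U be an admissible functional on U. Let Assumption A1 hold. If Σ is 0-GUAS and UGB (with respect to ‖·‖_U), then Σ is UGS (with respect to ‖·‖_U), i.e. there exist α,ρ∈K∞ such that ‖φ(t,t0,x0,u)‖_X ≤ α(‖x0‖_X)+ρ(‖u‖_U) for all t≥t0≥0, x0∈X, u∈U. -/

import Mathlib

open Set Filter

/-- A (forward complete) time-varying system with inputs `Σ = (X, U, φ)`:
`U` is a set of admissible inputs containing the zero input and closed under
concatenation, and `φ` is a transition map satisfying the identity, causality
and semigroup axioms. -/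
structure Sys (X Uv : Type*) [NormedAddCommGroup X] [NormedSpace ℝ X]
    [AddCommGroup Uv] [Module ℝ Uv] where
  U : Set (ℝ → Uv)
  zero_mem : (fun _ => (0 : Uv)) ∈ U
  concat_mem : ∀ u ∈ U, ∀ v ∈ U, ∀ t : ℝ, 0 < t →
      (fun r => if r ≤ t then u r else v r) ∈ U
  phi : ℝ → ℝ → X → (ℝ → Uv) → X
  identity : ∀ t : ℝ, 0 ≤ t → ∀ x u, u ∈ U → phi t t x u = x
  causality : ∀ s t : ℝ, ∀ x : X, ∀ u v, 0 ≤ s → s < t → u ∈ U → v ∈ U →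
      (∀ r, s < r → r ≤ t → v r = u r) → phi t s x v = phi t s x u
  semigroup : ∀ s τ t : ℝ, ∀ x : X, ∀ u, 0 ≤ s → s < τ → τ < t → u ∈ U →
      phi t τ (phi τ s x u) u = phi t s x u

variable {X Uv : Type*} [NormedAddCommGroup X] [NormedSpace ℝ X]
  [AddCommGroup Uv] [Module ℝ Uv]

/-- The truncation `u_(s,t]` of an input. -/
noncomputable def trunc (u : ℝ → Uv) (s t : ℝ) : ℝ → Uv := fun r => if s < r ∧ r ≤ t then u r else 0

/-- The truncation `u_(s,∞)` of an input. -/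
noncomputable def truncFrom (u : ℝ → Uv) (s : ℝ) : ℝ → Uv := fun r => if s < r then u r else 0

/-- An admissible functional `‖·‖_U : U → [0,∞]`. -/
structure IsAdmissible (S : Sys X Uv) (nrm : (ℝ → Uv) → ENNReal) : Prop where
  zero : nrm (fun _ => (0 : Uv)) = 0
  fin : ∀ u ∈ S.U, ∀ s t : ℝ, 0 ≤ s → s < t → nrm (trunc u s t) < ⊤
  le_tail : ∀ u ∈ S.U, ∀ s t : ℝ, 0 ≤ s → s < t → nrm (trunc u s t) ≤ nrm (truncFrom u s)
  tail_le : ∀ u ∈ S.U, ∀ s : ℝ, 0 ≤ s → nrm (truncFrom u s) ≤ nrm u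

/-- A function of class `K`. -/
def ClassK (α : ℝ → ℝ) : Prop :=
  ContinuousOn α (Ici 0) ∧ StrictMonoOn α (Ici 0) ∧ α 0 = 0

/-- A function of class `K∞`. -/
def ClassKInf (α : ℝ → ℝ) : Prop := ClassK α ∧ Tendsto α atTop atTop


/-- A function of class `KL`. -/
def ClassKL (β : ℝ → ℝ → ℝ) : Prop :=
  (∀ t ≥ (0:ℝ), ClassK (fun r => β r t)) ∧
  (∀ r ≥ (0:ℝ), AntitoneOn (fun t => β r t) (Ici 0) ∧
    Tendsto (fun t => β r t) atTop (nhds 0))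

/-- Assumption 1: continuity of trajectories with respect to the input at the zero input,
uniformly over the initial time. -/
def AssumptionA1 (S : Sys X Uv) (nrm : (ℝ → Uv) → ENNReal) : Prop :=
  ∀ r > (0:ℝ), ∀ ε > (0:ℝ), ∀ T > (0:ℝ), ∃ δ > (0:ℝ),
    ∀ t0 ≥ (0:ℝ), ∀ x0 : X, ∀ u ∈ S.U, nrm u ≤ ENNReal.ofReal δ →
      ∀ tstar ∈ Icc t0 (t0 + T),
        (∀ t ∈ Icc t0 tstar,
            ‖S.phi t t0 x0 u‖ ≤ r ∧ ‖S.phi t t0 x0 (fun _ => 0)‖ ≤ r) →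
        ∀ t ∈ Icc t0 tstar,
          ‖S.phi t t0 x0 (fun _ => 0) - S.phi t t0 x0 u‖ ≤ ε

/-- The system is 0-GUAS: globally uniformly asymptotically stable under zero input. -/
def ZeroGUAS (S : Sys X Uv) : Prop :=
  ∃ β, ClassKL β ∧ ∀ t0 ≥ (0:ℝ), ∀ x0 : X, ∀ t ≥ t0,
    ‖S.phi t t0 x0 (fun _ => 0)‖ ≤ β ‖x0‖ (t - t0)

/-- The system is ISS with respect to the admissible functional `nrm`.
Inputs with infinite `nrm` satisfy the estimate trivially thanks to the
convention `ρ(∞) = ∞`, so only inputs of finite `nrm` are quantified over. -/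
def ISS (S : Sys X Uv) (nrm : (ℝ → Uv) → ENNReal) : Prop :=
  ∃ β ρ, ClassKL β ∧ ClassKInf ρ ∧
    ∀ t0 ≥ (0:ℝ), ∀ x0 : X, ∀ u ∈ S.U, nrm u < ⊤ → ∀ t ≥ t0,
      ‖S.phi t t0 x0 u‖ ≤ β ‖x0‖ (t - t0) + ρ (nrm u).toReal

/-- The system is UGB (uniformly globally bounded) with respect to `nrm`. -/
def UGB (S : Sys X Uv) (nrm : (ℝ → Uv) → ENNReal) : Prop :=
  ∃ c α ρ, 0 ≤ c ∧ ClassKInf α ∧ ClassKInf ρ ∧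
    ∀ t0 ≥ (0:ℝ), ∀ x0 : X, ∀ u ∈ S.U, nrm u < ⊤ → ∀ t ≥ t0,
      ‖S.phi t t0 x0 u‖ ≤ c + α ‖x0‖ + ρ (nrm u).toReal

/-- The system is UGS (uniformly globally stable) with respect to `nrm`, i.e. UGB with `c = 0`. -/
def UGS (S : Sys X Uv) (nrm : (ℝ → Uv) → ENNReal) : Prop :=
  ∃ α ρ, ClassKInf α ∧ ClassKInf ρ ∧
    ∀ t0 ≥ (0:ℝ), ∀ x0 : X, ∀ u ∈ S.U, nrm u < ⊤ → ∀ t ≥ t0,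
      ‖S.phi t t0 x0 u‖ ≤ α ‖x0‖ + ρ (nrm u).toReal

/-- Condition (E) on the admissible functional. -/
def CondE (S : Sys X Uv) (nrm : (ℝ → Uv) → ENNReal) : Prop :=
  ∀ u ∈ S.U, ∀ t1 t2 t3 : ℝ, 0 ≤ t1 → t1 < t2 → t2 < t3 →
    nrm (trunc u t1 t2) + nrm (trunc u t2 t3) ≤ nrm (trunc u t1 t3)


private lemma sys_cocycle (S : Sys X Uv) {u : ℝ → Uv} (hu : u ∈ S.U) {t0 s t : ℝ}
    (h0 : 0 ≤ t0) (h1 : t0 ≤ s) (h2 : s ≤ t) (x : X) :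
    S.phi t s (S.phi s t0 x u) u = S.phi t t0 x u := by
  rcases eq_or_lt_of_le h1 with rfl | h1
  · rw [S.identity t0 h0 x u hu]
  · rcases eq_or_lt_of_le h2 with rfl | h2
    · exact S.identity s (h0.trans h1.le) _ u hu
    · exact S.semigroup t0 s t x u h0 h1 h2 hu

private lemma uls_of_guas_ugb (S : Sys X Uv) (nrm : (ℝ → Uv) → ENNReal)
    (hA1 : AssumptionA1 S nrm) (hguas : ZeroGUAS S) (hugb : UGB S nrm) :
    ∀ ε > (0:ℝ), ∃ δ > (0:ℝ), ∀ t0 ≥ (0:ℝ), ∀ x0 : X, ‖x0‖ ≤ δ →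
      ∀ u ∈ S.U, nrm u ≤ ENNReal.ofReal δ → ∀ t ≥ t0, ‖S.phi t t0 x0 u‖ ≤ ε := by
  obtain ⟨β, hβKL, hβ⟩ := hguas
  obtain ⟨c, α, ρ, hc, hα, hρ, hB⟩ := hugb
  intro ε hε
  have hαmono : MonotoneOn α (Ici 0) := hα.1.2.1.monotoneOn
  have hρmono : MonotoneOn ρ (Ici 0) := hρ.1.2.1.monotoneOn
  -- choose δ2
  have hβ0K : ClassK (fun r => β r 0) := hβKL.1 0 le_rfl
  have hcont : ContinuousWithinAt (fun r => β r 0) (Ici 0) 0 := hβ0K.1 0 self_mem_Ici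
  obtain ⟨δ1, hδ1pos, hδ1⟩ := Metric.continuousWithinAt_iff.mp hcont (ε/2) (by linarith)
  set δ2 : ℝ := min (δ1/2) (min (ε/2) 1) with hδ2def
  have hδ2pos : 0 < δ2 := by
    apply lt_min (by linarith) (lt_min (by linarith) one_pos)
  have hδ21 : δ2 ≤ 1 := (min_le_right _ _).trans (min_le_right _ _)
  have hδ2ε : δ2 ≤ ε/2 := (min_le_right _ _).trans (min_le_left _ _)
  have hβδ2nn : 0 ≤ β δ2 0 := by
    have h := hβ0K.2.1 self_mem_Ici (le_of_lt hδ2pos : δ2 ∈ Ici 0) hδ2pos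
    have h0 : β 0 0 = 0 := hβ0K.2.2
    simp only [h0] at h; exact h.le
  have hβδ2 : β δ2 0 ≤ ε/2 := by
    have := hδ1 (mem_Ici.mpr (le_of_lt hδ2pos)) (by
      rw [Real.dist_eq, sub_zero, abs_of_pos hδ2pos]; linarith [min_le_left (δ1/2) (min (ε/2) 1)])
    simp only [hβ0K.2.2, Real.dist_eq, sub_zero] at this
    rw [abs_of_nonneg hβδ2nn] at this
    linarith
  -- choose T
  obtain ⟨hanti, htend⟩ := hβKL.2 δ2 hδ2pos.le
  obtain ⟨T, hT1, hTβ⟩ := ((eventually_ge_atTop (1:ℝ)).and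
    (htend.eventually_lt_const (by linarith : (0:ℝ) < δ2/2))).exists
  have hTpos : (0:ℝ) < T := by linarith
  -- the uniform radius r
  set r : ℝ := max (c + α 1 + ρ 1) (β δ2 0) + 1 with hrdef
  have hrpos : 0 < r := by
    have : β δ2 0 ≤ max (c + α 1 + ρ 1) (β δ2 0) := le_max_right _ _
    linarith
  have hr1 : c + α 1 + ρ 1 ≤ r := by
    have := le_max_left (c + α 1 + ρ 1) (β δ2 0); linarith
  have hr2 : β δ2 0 ≤ r := by
    have := le_max_right (c + α 1 + ρ 1) (β δ2 0); linarith
  set ε' : ℝ := min (δ2/2) (ε/2) with hε'def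
  have hε'pos : 0 < ε' := lt_min (by linarith) (by linarith)
  obtain ⟨δ3, hδ3pos, hA⟩ := hA1 r hrpos ε' hε'pos T hTpos
  refine ⟨min δ2 δ3, lt_min hδ2pos hδ3pos, ?_⟩
  intro t0 ht0 x0 hx0 u hu hnu t ht
  have hδδ2 : min δ2 δ3 ≤ δ2 := min_le_left _ _
  have hnuδ3 : nrm u ≤ ENNReal.ofReal δ3 := hnu.trans (ENNReal.ofReal_le_ofReal (min_le_right _ _))
  have hnufin : nrm u ≠ ⊤ := (hnu.trans_lt ENNReal.ofReal_lt_top).ne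
  have hnufin' : nrm u < ⊤ := hnu.trans_lt ENNReal.ofReal_lt_top
  have hnur1 : (nrm u).toReal ≤ 1 := by
    have h1 : (nrm u).toReal ≤ min δ2 δ3 :=
      ENNReal.toReal_le_of_le_ofReal (le_of_lt (lt_min hδ2pos hδ3pos)) hnu
    linarith [hδδ2]
  have hρnu : ρ (nrm u).toReal ≤ ρ 1 :=
    hρmono ENNReal.toReal_nonneg (mem_Ici.mpr zero_le_one) hnur1
  -- the window lemma
  have W : ∀ s, t0 ≤ s → ‖S.phi s t0 x0 u‖ ≤ δ2 →
      (∀ t', s ≤ t' → t' ≤ s + T → ‖S.phi t' t0 x0 u‖ ≤ ε) ∧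
        ‖S.phi (s + T) t0 x0 u‖ ≤ δ2 := by
    intro s hs hys
    set y := S.phi s t0 x0 u with hy
    have hs0 : 0 ≤ s := ht0.trans hs
    have hzb : ∀ t' ∈ Icc s (s+T), ‖S.phi t' s y (fun _ => 0)‖ ≤ β δ2 (t' - s) := by
      intro t' ht'
      have h2 := hβ s hs0 y t' ht'.1
      have h3 : β ‖y‖ (t' - s) ≤ β δ2 (t' - s) :=
        (hβKL.1 (t' - s) (by linarith [ht'.1])).2.1.monotoneOn (norm_nonneg y)
          hδ2pos.le hys
      linarith
    have hβle : ∀ t' ∈ Icc s (s+T), β δ2 (t' - s) ≤ β δ2 0 := by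
      intro t' ht'
      exact hanti (mem_Ici.mpr le_rfl) (mem_Ici.mpr (by linarith [ht'.1])) (by linarith [ht'.1])
    have hb : ∀ t' ∈ Icc s (s+T), ‖S.phi t' s y u‖ ≤ r ∧ ‖S.phi t' s y (fun _ => 0)‖ ≤ r := by
      intro t' ht'
      constructor
      · have h1 := hB s hs0 y u hu hnufin' t' ht'.1
        have hαy : α ‖y‖ ≤ α 1 :=
          hαmono (norm_nonneg y) (mem_Ici.mpr zero_le_one) (hys.trans hδ21)
        calc ‖S.phi t' s y u‖ ≤ c + α ‖y‖ + ρ (nrm u).toReal := h1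
          _ ≤ c + α 1 + ρ 1 := by linarith
          _ ≤ r := hr1
      · calc ‖S.phi t' s y (fun _ => 0)‖ ≤ β δ2 (t' - s) := hzb t' ht'
          _ ≤ β δ2 0 := hβle t' ht'
          _ ≤ r := hr2
    have hdiff := hA s hs0 y u hu hnuδ3 (s + T) ⟨by linarith, le_rfl⟩ hb
    have key : ∀ t' ∈ Icc s (s+T), ‖S.phi t' t0 x0 u‖ ≤ β δ2 (t' - s) + ε' := by
      intro t' ht'
      have e1 : S.phi t' s y u = S.phi t' t0 x0 u := sys_cocycle S hu ht0 hs ht'.1 x0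
      have hd := hdiff t' ht'
      have htri : ‖S.phi t' s y u‖ ≤
          ‖S.phi t' s y (fun _ => 0)‖ + ‖S.phi t' s y (fun _ => 0) - S.phi t' s y u‖ := by
        calc ‖S.phi t' s y u‖
            = ‖S.phi t' s y (fun _ => 0) - (S.phi t' s y (fun _ => 0) - S.phi t' s y u)‖ := by
              rw [sub_sub_cancel]
          _ ≤ _ := norm_sub_le _ _
      have hz := hzb t' ht'
      rw [← e1]
      linarith
    constructor
    · intro t' h1 h2
      have hk := key t' ⟨h1, h2⟩
      have hb0 := hβle t' ⟨h1, h2⟩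
      have : ε' ≤ ε/2 := min_le_right _ _
      linarith [hβδ2]
    · have hk := key (s + T) ⟨by linarith, le_rfl⟩
      have he : s + T - s = T := by ring
      rw [he] at hk
      have : ε' ≤ δ2/2 := min_le_left _ _
      linarith [hTβ.le]
  -- induction along windows
  have hind : ∀ n : ℕ, ‖S.phi (t0 + n * T) t0 x0 u‖ ≤ δ2 := by
    intro n
    induction n with
    | zero =>
      have he : t0 + (0:ℕ) * T = t0 := by push_cast; ring
      rw [he, S.identity t0 ht0 x0 u hu]
      exact hx0.trans hδδ2
    | succ n ih =>
      have hs : t0 ≤ t0 + n * T := by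
        have : (0:ℝ) ≤ (n:ℝ) * T := by positivity
        linarith
      have h := (W (t0 + n * T) hs ih).2
      have he : t0 + (n:ℝ) * T + T = t0 + ((n:ℕ)+1 : ℕ) * T := by push_cast; ring
      rwa [he] at h
  -- conclude
  set n := ⌊(t - t0)/T⌋₊ with hn
  have hdivnn : 0 ≤ (t - t0)/T := div_nonneg (by linarith) hTpos.le
  have hn1 : (n:ℝ) ≤ (t - t0)/T := Nat.floor_le hdivnn
  have hn2 : (t - t0)/T < n + 1 := Nat.lt_floor_add_one _
  have hs1 : t0 + n * T ≤ t := by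
    have := (le_div_iff₀ hTpos).mp hn1
    linarith
  have hs2 : t ≤ t0 + n * T + T := by
    have := (div_lt_iff₀ hTpos).mp hn2
    nlinarith
  have hsge : t0 ≤ t0 + n * T := by
    have : (0:ℝ) ≤ (n:ℝ) * T := by positivity
    linarith
  exact (W (t0 + n * T) hsge (hind n)).1 t hs1 hs2

/-- Lemma 3.5: under Assumption 1, a system that is 0-GUAS and UGB (with respect to an
admissible functional) is UGS (with respect to that functional). -/
theorem zeroGUAS_and_UGB_implies_UGS (S : Sys X Uv) (nrm : (ℝ → Uv) → ENNReal)
    (hadm : IsAdmissible S nrm) (hA1 : AssumptionA1 S nrm)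
    (hguas : ZeroGUAS S) (hugb : UGB S nrm) :
    UGS S nrm := by
  classical
  obtain ⟨c, α, ρ, hc, hα, hρ, hB⟩ := hugb
  have hαmono : MonotoneOn α (Ici 0) := hα.1.2.1.monotoneOn
  have hρmono : MonotoneOn ρ (Ici 0) := hρ.1.2.1.monotoneOn
  have hαnn : ∀ m : ℝ, 0 ≤ m → 0 ≤ α m := fun m hm => by
    have := hαmono (self_mem_Ici) (hm : m ∈ Ici 0) hm
    rw [hα.1.2.2] at this; exact this
  have hρnn : ∀ m : ℝ, 0 ≤ m → 0 ≤ ρ m := fun m hm => by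
    have := hρmono (self_mem_Ici) (hm : m ∈ Ici 0) hm
    rw [hρ.1.2.2] at this; exact this
  have huls := uls_of_guas_ugb S nrm hA1 hguas ⟨c, α, ρ, hc, hα, hρ, hB⟩
  have hulsn : ∀ n : ℕ, ∃ δ > (0:ℝ), ∀ t0 ≥ (0:ℝ), ∀ x0 : X, ‖x0‖ ≤ δ →
      ∀ u ∈ S.U, nrm u ≤ ENNReal.ofReal δ → ∀ t ≥ t0, ‖S.phi t t0 x0 u‖ ≤ (1/2)^n :=
    fun n => huls ((1/2)^n) (by positivity)
  choose D hDpos hD using hulsn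
  set d : ℕ → ℝ := fun n => min (D n) ((1/2)^n) with hd
  have hdpos : ∀ n, 0 < d n := fun n => lt_min (hDpos n) (by positivity)
  have hdD : ∀ n, d n ≤ D n := fun n => min_le_left _ _
  have hdle : ∀ n, d n ≤ (1/2)^n := fun n => min_le_right _ _
  -- the series part
  set f : ℕ → ℝ → ℝ := fun n m => 2 * (1/2)^n * min 1 (max 0 (m / d n)) with hf
  have hfnn : ∀ n m, 0 ≤ f n m := fun n m => by
    apply mul_nonneg (by positivity)
    exact le_min zero_le_one (le_max_left _ _)
  have hfle : ∀ n m, f n m ≤ 2 * (1/2)^n := fun n m => by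
    have h1 : min 1 (max 0 (m / d n)) ≤ 1 := min_le_left _ _
    calc f n m ≤ 2 * (1/2)^n * 1 := by
          apply mul_le_mul_of_nonneg_left h1 (by positivity)
      _ = 2 * (1/2)^n := by ring
  have hsumg : Summable (fun n : ℕ => 2 * (1/2:ℝ)^n) := summable_geometric_two.mul_left 2
  have hsumm : ∀ m, Summable (fun n => f n m) := fun m =>
    Summable.of_nonneg_of_le (fun n => hfnn n m) (fun n => hfle n m) hsumg
  set A : ℝ → ℝ := fun m => ∑' n : ℕ, f n m with hA
  have hfmono : ∀ n, Monotone (f n) := fun n a b hab => by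
    apply mul_le_mul_of_nonneg_left _ (by positivity)
    exact min_le_min le_rfl (max_le_max le_rfl (div_le_div_of_nonneg_right hab (hdpos n).le))
  have hAmono : Monotone A := fun a b hab =>
    Summable.tsum_le_tsum (fun n => hfmono n hab) (hsumm a) (hsumm b)
  have hAnn : ∀ m, 0 ≤ A m := fun m => tsum_nonneg (fun n => hfnn n m)
  have hA0 : A 0 = 0 := by
    have : ∀ n, f n 0 = 0 := fun n => by simp [hf]
    simp [hA, this]
  have hAcont : Continuous A := by
    apply continuous_tsum _ hsumg
    · intro n m
      rw [Real.norm_eq_abs, abs_of_nonneg (hfnn n m)]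
      exact hfle n m
    · intro n
      exact continuous_const.mul
        (continuous_const.min (continuous_const.max (continuous_id.div_const (d n))))
  -- the large part
  set G : ℝ → ℝ := fun m => (c + α m + ρ m) * min 1 (max 0 (m / d 0)) with hG
  have hminnn : ∀ m, 0 ≤ min 1 (max 0 (m / d 0)) := fun m =>
    le_min zero_le_one (le_max_left _ _)
  have hGnn : ∀ m : ℝ, 0 ≤ m → 0 ≤ G m := fun m hm =>
    mul_nonneg (by have := hαnn m hm; have := hρnn m hm; linarith) (hminnn m)
  have hG0 : G 0 = 0 := by simp [hG]
  have hGmono : MonotoneOn G (Ici 0) := by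
    intro a ha b hb hab
    apply mul_le_mul _ _ (hminnn a) _
    · have h1 := hαmono ha hb hab
      have h2 := hρmono ha hb hab
      linarith
    · exact min_le_min le_rfl (max_le_max le_rfl (div_le_div_of_nonneg_right hab (hdpos 0).le))
    · have := hαnn b hb; have := hρnn b hb; linarith
  have hGcont : ContinuousOn G (Ici 0) := by
    apply ContinuousOn.mul
    · exact (continuousOn_const.add hα.1.1).add hρ.1.1
    · exact (continuous_const.min (continuous_const.max (continuous_id.div_const (d 0)))).continuousOn
  -- assemble sigma
  set σ : ℝ → ℝ := fun m => m + A m + G m with hσ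
  have hσ0 : σ 0 = 0 := by simp [hσ, hA0, hG0]
  have hσmono : StrictMonoOn σ (Ici 0) := by
    intro a ha b hb hab
    have h1 := hAmono hab.le
    have h2 := hGmono ha hb hab.le
    simp only [hσ]
    linarith
  have hσnn : ∀ m : ℝ, 0 ≤ m → 0 ≤ σ m := fun m hm => by
    have := hAnn m; have := hGnn m hm
    simp only [hσ]; linarith
  have hσcont : ContinuousOn σ (Ici 0) :=
    (continuous_id.continuousOn.add hAcont.continuousOn).add hGcont
  have hσtop : Tendsto σ atTop atTop := by
    apply tendsto_atTop_mono' atTop _ tendsto_id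
    filter_upwards [eventually_ge_atTop (0:ℝ)] with m hm
    have := hAnn m; have := hGnn m hm
    simp only [hσ, id]; linarith
  have hσK : ClassKInf σ := ⟨⟨hσcont, hσmono, hσ0⟩, hσtop⟩
  refine ⟨σ, σ, hσK, hσK, ?_⟩
  intro t0 ht0 x0 u hu hfin t ht
  set m : ℝ := max ‖x0‖ (nrm u).toReal with hm
  have hmnn : 0 ≤ m := le_trans (norm_nonneg x0) (le_max_left _ _)
  have hx0m : ‖x0‖ ≤ m := le_max_left _ _
  have hnum : (nrm u).toReal ≤ m := le_max_right _ _
  have hmain : ‖S.phi t t0 x0 u‖ ≤ σ m := by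
    rcases eq_or_lt_of_le hmnn with hm0 | hm0
    · -- m = 0
      have hx00 : ‖x0‖ = 0 := le_antisymm (by rw [← hm0] at hx0m; exact hx0m) (norm_nonneg _)
      have hnu0 : nrm u = 0 := by
        have h1 : (nrm u).toReal = 0 :=
          le_antisymm (by rw [← hm0] at hnum; exact hnum) ENNReal.toReal_nonneg
        rcases ENNReal.toReal_eq_zero_iff _ |>.mp h1 with h | h
        · exact h
        · exact absurd h hfin.ne
      have hb : ∀ n : ℕ, ‖S.phi t t0 x0 u‖ ≤ (1/2)^n := fun n =>
        hD n t0 ht0 x0 (by rw [hx00]; exact (hDpos n).le) u hu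
          (by rw [hnu0]; exact zero_le) t ht
      have h0 : ‖S.phi t t0 x0 u‖ ≤ 0 :=
        ge_of_tendsto' (tendsto_pow_atTop_nhds_zero_of_lt_one (by norm_num) (by norm_num)) hb
      rw [← hm0, hσ0]
      exact h0
    · by_cases hmd : m ≤ d 0
      · -- small case : use ULS
        have hex : ∃ n, d n < m := by
          have htd : Tendsto d atTop (nhds 0) := by
            apply squeeze_zero (fun n => (hdpos n).le) hdle
            exact tendsto_pow_atTop_nhds_zero_of_lt_one (by norm_num) (by norm_num)
          exact (htd.eventually_lt_const hm0).exists
        set n0 := Nat.find hex with hn0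
        have hdn0 : d n0 < m := Nat.find_spec hex
        have hn0ne : n0 ≠ 0 := by
          intro h
          rw [h] at hdn0
          exact absurd hmd (not_le.mpr hdn0)
        obtain ⟨k, hk⟩ := Nat.exists_eq_succ_of_ne_zero hn0ne
        have hmk : m ≤ d k := by
          by_contra hcon
          exact Nat.find_min hex (by omega : k < n0) (not_le.mp hcon)
        have hbnd : ‖S.phi t t0 x0 u‖ ≤ (1/2)^k := by
          apply hD k t0 ht0 x0 (hx0m.trans (hmk.trans (hdD k))) u hu _ t ht
          have h1 : nrm u = ENNReal.ofReal (nrm u).toReal := (ENNReal.ofReal_toReal hfin.ne).symm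
          rw [h1]
          exact ENNReal.ofReal_le_ofReal (hnum.trans (hmk.trans (hdD k)))
        have hterm : f (k+1) m = (1/2)^k := by
          have h1 : (1:ℝ) < m / d (k+1) := by
            rw [one_lt_div (hdpos (k+1))]
            rw [hk] at hdn0; exact hdn0
          have h2 : max 0 (m / d (k+1)) = m / d (k+1) := max_eq_right (by linarith)
          have h3 : min 1 (max 0 (m / d (k+1))) = 1 := by rw [h2]; exact min_eq_left h1.le
          simp only [hf, h3, mul_one, pow_succ]
          ring
        have hσge : (1/2:ℝ)^k ≤ σ m := by
          have h1 : f (k+1) m ≤ A m := Summable.le_tsum (hsumm m) (k+1) (fun j _ => hfnn j m)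
          have h2 := hGnn m hmnn
          rw [← hterm]
          simp only [hσ]
          linarith
        exact hbnd.trans hσge
      · -- large case : use UGB
        push_neg at hmd
        have hbnd := hB t0 ht0 x0 u hu hfin t ht
        have hα1 : α ‖x0‖ ≤ α m := hαmono (norm_nonneg x0) hmnn hx0m
        have hρ1 : ρ (nrm u).toReal ≤ ρ m := hρmono ENNReal.toReal_nonneg hmnn hnum
        have hGm : G m = c + α m + ρ m := by
          have h1 : (1:ℝ) < m / d 0 := by rw [one_lt_div (hdpos 0)]; exact hmd
          have h2 : min 1 (max 0 (m / d 0)) = 1 := by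
            rw [max_eq_right (by linarith : (0:ℝ) ≤ m / d 0)]
            exact min_eq_left h1.le
          simp only [hG, h2, mul_one]
        have : c + α m + ρ m ≤ σ m := by
          have h1 := hAnn m
          simp only [hσ, hGm]
          linarith
        linarith
  have hsplit : σ m ≤ σ ‖x0‖ + σ (nrm u).toReal := by
    rcases max_choice ‖x0‖ (nrm u).toReal with h | h
    · rw [hm, h]
      have := hσnn (nrm u).toReal ENNReal.toReal_nonneg
      linarith
    · rw [hm, h]
      have := hσnn ‖x0‖ (norm_nonneg x0)
      linarith
  linarith
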